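/- Let σ ∈ F̄[[X₁]] be a power series with m₁(X₁, σ) = 0, where m₁ ∈ F[X₁, T] is irreducible (as a polynomial in T over F(X₁)) with deg_T m₁ ≤ D and deg_{X₁} m₁ ≤ δ. Set N = 2Dδ and let σ_N be the truncation of σ modulo X₁^{N+1}. If p ∈ F[X₁, T] satisfies deg_{X₁} p ≤ δ, deg_T p ≤ D, and p(X₁, σ_N) ≡ 0 mod X₁^{N+1}, then m₁ divides p in F[X₁, T]. -/

import Mathlib

open Polynomial

/-- Coefficient extraction from `∑ k, C (c k) * X ^ k`. -/
lemma coeff_sum_C_mul_X_pow {S : Type*} [Semiring S] {e : ℕ} (c : Fin e → S) (i : Fin e) :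
    (∑ k : Fin e, Polynomial.C (c k) * Polynomial.X ^ (k : ℕ)).coeff (i : ℕ) = c i := by
  rw [Polynomial.finset_sum_coeff]
  simp only [Polynomial.coeff_C_mul, Polynomial.coeff_X_pow]
  rw [Finset.sum_eq_single i]
  · simp
  · intro k _ hk
    have : (i : ℕ) ≠ (k : ℕ) := fun h => hk (Fin.ext h.symm)
    simp [this]
  · simp

/-- Degree bound for `∑ k, C (c k) * X ^ k`. -/
lemma natDegree_sum_C_mul_X_pow_lt {S : Type*} [Semiring S] [Nontrivial S] {e : ℕ} (he : 0 < e)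
    (c : Fin e → S) :
    (∑ k : Fin e, Polynomial.C (c k) * Polynomial.X ^ (k : ℕ)).natDegree < e := by
  have := Polynomial.natDegree_sum_le_of_forall_le Finset.univ
    (fun k : Fin e => Polynomial.C (c k) * Polynomial.X ^ (k : ℕ)) (n := e - 1) ?_
  · omega
  · intro k _
    refine (Polynomial.natDegree_C_mul_le _ _).trans ?_
    rw [Polynomial.natDegree_X_pow]
    omega

/-- Degree bound for the determinant of a matrix of polynomials with entries of degree
at most `δ`. -/
lemma natDegree_det_le_of_forall_le {R : Type*} [CommRing R] {n : Type*} [Fintype n]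
    [DecidableEq n] (M : Matrix n n (Polynomial R)) (δ N : ℕ)
    (hMdeg : ∀ r j, (M r j).natDegree ≤ δ)
    (hcard : Fintype.card n * δ ≤ N) : (M.det).natDegree ≤ N := by
  rw [Matrix.det_apply]
  refine Polynomial.natDegree_sum_le_of_forall_le _ _ (fun g _ => ?_)
  rw [Units.smul_def, zsmul_eq_mul]
  refine (Polynomial.natDegree_mul_le).trans ?_
  rw [Polynomial.natDegree_intCast, zero_add]
  refine (Polynomial.natDegree_prod_le _ _).trans ?_
  calc ∑ j, (M (g j) j).natDegree ≤ ∑ _j : n, δ :=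
        Finset.sum_le_sum (fun j _ => hMdeg _ _)
    _ = Fintype.card n * δ := by simp [Finset.sum_const, mul_comm]
    _ ≤ N := hcard

/-- The determinant of the generalized Sylvester matrix of `m₁` and `p` is a linear
combination of `m₁` and `p`. -/
lemma sylvester_det_mem_span {R : Type*} [CommRing R] (e d : ℕ) (hn0 : 0 < e + d)
    (m₁ p : Polynomial R)
    (P : Fin e ⊕ Fin d → Polynomial R)
    (hP : P = Sum.elim (fun i : Fin e => m₁ * Polynomial.X ^ (i : ℕ))
      (fun i : Fin d => p * Polynomial.X ^ (i : ℕ)))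
    (hPdeg : ∀ r (k : ℕ), e + d ≤ k → (P r).coeff k = 0)
    (M : Matrix (Fin e ⊕ Fin d) (Fin e ⊕ Fin d) R)
    (hM : M = Matrix.of (fun r j => (P r).coeff ((finSumFinEquiv j : ℕ)))) :
    ∃ a b : Polynomial R, a * m₁ + b * p = Polynomial.C M.det := by
  classical
  set j₀ : Fin e ⊕ Fin d := finSumFinEquiv.symm ⟨0, hn0⟩ with hj₀
  set w : Fin e ⊕ Fin d → R := fun r => M.adjugate j₀ r with hw
  refine ⟨∑ i : Fin e, Polynomial.C (w (Sum.inl i)) * Polynomial.X ^ (i : ℕ),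
    ∑ i : Fin d, Polynomial.C (w (Sum.inr i)) * Polynomial.X ^ (i : ℕ), ?_⟩
  have hsum : (∑ i : Fin e, Polynomial.C (w (Sum.inl i)) * Polynomial.X ^ (i : ℕ)) * m₁
      + (∑ i : Fin d, Polynomial.C (w (Sum.inr i)) * Polynomial.X ^ (i : ℕ)) * p
      = ∑ r, Polynomial.C (w r) * P r := by
    rw [Fintype.sum_sum_type, hP]
    simp only [Sum.elim_inl, Sum.elim_inr]
    rw [Finset.sum_mul, Finset.sum_mul]
    congr 1 <;> exact Finset.sum_congr rfl (fun i _ => by ring)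
  rw [hsum]
  apply Polynomial.ext
  intro k
  rw [Polynomial.finset_sum_coeff]
  simp only [Polynomial.coeff_C_mul]
  by_cases hk : k < e + d
  · set j : Fin e ⊕ Fin d := finSumFinEquiv.symm ⟨k, hk⟩ with hj
    have hjk : (finSumFinEquiv j : ℕ) = k := by rw [hj]; simp
    have hPM : ∀ r, (P r).coeff k = M r j := by
      intro r
      rw [hM, Matrix.of_apply, hjk]
    simp_rw [hPM]
    have hadj := congrFun (congrFun (Matrix.adjugate_mul M) j₀) j
    rw [Matrix.mul_apply] at hadj
    simp only [hw]
    rw [hadj, Matrix.smul_apply, Matrix.one_apply, Polynomial.coeff_C, smul_eq_mul]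
    by_cases hk0 : k = 0
    · have : j₀ = j := by
        rw [hj₀, hj]
        congr 1
        exact Fin.ext hk0.symm
      simp [this, hk0]
    · have : j₀ ≠ j := by
        intro hcontr
        apply hk0
        have := congrArg (fun x => (finSumFinEquiv x : ℕ)) hcontr
        simpa [hj₀, hjk] using this.symm
      simp [this, hk0]
  · simp only [hPdeg _ k (le_of_not_gt hk), mul_zero, Finset.sum_const_zero]
    rw [Polynomial.coeff_C, if_neg (by omega)]

/-- If `m₁` is irreducible over `RatFunc F` and does not divide `p` there, then the
generalized Sylvester determinant of `m₁` and `p` is nonzero. -/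
lemma sylvester_det_ne_zero {F : Type*} [Field F] (e d : ℕ) (hd1 : 0 < d)
    (m₁ p : Polynomial (Polynomial F))
    (hd : m₁.natDegree = d) (he : p.natDegree = e)
    (hirr : Irreducible (m₁.map (algebraMap (Polynomial F) (RatFunc F))))
    (hndvd : ¬ (m₁.map (algebraMap (Polynomial F) (RatFunc F)) ∣
      p.map (algebraMap (Polynomial F) (RatFunc F))))
    (P : Fin e ⊕ Fin d → Polynomial (Polynomial F))
    (hP : P = Sum.elim (fun i : Fin e => m₁ * Polynomial.X ^ (i : ℕ))
      (fun i : Fin d => p * Polynomial.X ^ (i : ℕ)))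
    (M : Matrix (Fin e ⊕ Fin d) (Fin e ⊕ Fin d) (Polynomial F))
    (hM : M = Matrix.of (fun r j => (P r).coeff ((finSumFinEquiv j : ℕ)))) :
    M.det ≠ 0 := by
  classical
  set ι := algebraMap (Polynomial F) (RatFunc F) with hι
  have hιinj : Function.Injective ι := IsFractionRing.injective _ _
  intro h0
  have hdet' : (M.map ι).det = 0 := by
    have h := RingHom.map_det ι M
    rw [h0, map_zero] at h
    rw [RingHom.mapMatrix_apply] at h
    exact h.symm
  obtain ⟨v, hvne, hv⟩ := Matrix.exists_vecMul_eq_zero_iff.mpr hdet'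
  set A := ∑ i : Fin e, Polynomial.C (v (Sum.inl i)) * Polynomial.X ^ (i : ℕ) with hA
  set B := ∑ i : Fin d, Polynomial.C (v (Sum.inr i)) * Polynomial.X ^ (i : ℕ) with hB
  have hdm : (m₁.map ι).natDegree = d := by
    rw [natDegree_map_eq_of_injective hιinj, hd]
  have hpm : (p.map ι).natDegree ≤ e := by
    rw [← he]; exact Polynomial.natDegree_map_le
  have hm₁ne : (m₁.map ι) ≠ 0 := hirr.ne_zero
  have hrel : A * (m₁.map ι) + B * (p.map ι) = 0 := by
    have hsum : A * (m₁.map ι) + B * (p.map ι) = ∑ r, Polynomial.C (v r) * (P r).map ι := by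
      rw [Fintype.sum_sum_type, hP]
      simp only [Sum.elim_inl, Sum.elim_inr, Polynomial.map_mul, Polynomial.map_pow,
        Polynomial.map_X]
      rw [hA, hB, Finset.sum_mul, Finset.sum_mul]
      congr 1 <;> exact Finset.sum_congr rfl (fun i _ => by ring)
    rw [hsum]
    apply Polynomial.ext
    intro k
    rw [Polynomial.finset_sum_coeff, Polynomial.coeff_zero]
    simp only [Polynomial.coeff_C_mul, Polynomial.coeff_map]
    by_cases hk : k < e + d
    · set j : Fin e ⊕ Fin d := finSumFinEquiv.symm ⟨k, hk⟩ with hj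
      have hjk : (finSumFinEquiv j : ℕ) = k := by rw [hj]; simp
      have hPM : ∀ r, ι ((P r).coeff k) = (M.map ι) r j := by
        intro r
        rw [hM, Matrix.map_apply, Matrix.of_apply, hjk]
      simp_rw [hPM]
      have := congrFun hv j
      rw [Matrix.vecMul, dotProduct] at this
      exact this
    · have hPdeg : ∀ r, (P r).coeff k = 0 := by
        rintro (i | i)
        · rw [hP]
          simp only [Sum.elim_inl]
          rw [Polynomial.coeff_mul_X_pow']
          have hi : (i : ℕ) < e := i.isLt
          rw [if_pos (by omega)]
          exact Polynomial.coeff_eq_zero_of_natDegree_lt (by omega)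
        · rw [hP]
          simp only [Sum.elim_inr]
          rw [Polynomial.coeff_mul_X_pow']
          have hi : (i : ℕ) < d := i.isLt
          rw [if_pos (by omega)]
          exact Polynomial.coeff_eq_zero_of_natDegree_lt (by omega)
      simp [hPdeg]
  by_cases hB0 : B = 0
  · have hA0 : A = 0 := by
      rw [hB0, zero_mul, add_zero] at hrel
      rcases mul_eq_zero.mp hrel with h | h
      · exact h
      · exact absurd h hm₁ne
    apply hvne
    funext r
    rcases r with i | i
    · have := coeff_sum_C_mul_X_pow (fun i : Fin e => v (Sum.inl i)) i
      rw [← hA, hA0, Polynomial.coeff_zero] at this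
      exact this.symm
    · have := coeff_sum_C_mul_X_pow (fun i : Fin d => v (Sum.inr i)) i
      rw [← hB, hB0, Polynomial.coeff_zero] at this
      exact this.symm
  · have hdvdB : (m₁.map ι) ∣ B * (p.map ι) := by
      refine ⟨-A, ?_⟩
      linear_combination hrel
    have hprime : Prime (m₁.map ι) := hirr.prime
    rcases hprime.2.2 _ _ hdvdB with h | h
    · have hBdeg : B.natDegree < d := natDegree_sum_C_mul_X_pow_lt hd1 _
      exact hB0 (Polynomial.eq_zero_of_dvd_of_natDegree_lt h (by rw [hdm]; exact hBdeg))
    · exact hndvd h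

/-- Evaluation at `σ` of a polynomial congruence modulo a truncation. -/
lemma X_pow_dvd_eval₂_of_trunc {F K : Type*} [Field F] [Field K] [Algebra F K] (N : ℕ)
    (p : Polynomial (Polynomial F)) (σ : PowerSeries K)
    (φ : Polynomial F →+* PowerSeries K)
    (hφ' : ∀ q : Polynomial F, φ q = ((q.map (algebraMap F K) : Polynomial K) : PowerSeries K))
    (hcong : (Polynomial.X : Polynomial K) ^ (N + 1) ∣
      Polynomial.eval₂ (Polynomial.mapRingHom (algebraMap F K))
        (PowerSeries.trunc (N + 1) σ) p) :
    (PowerSeries.X : PowerSeries K) ^ (N + 1) ∣ Polynomial.eval₂ φ σ p := by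
  classical
  set ψ : Polynomial K →+* PowerSeries K := Polynomial.coeToPowerSeries.ringHom with hψ
  have hψ' : ∀ q : Polynomial K, ψ q = (q : PowerSeries K) := fun q => rfl
  have hcomp : ψ.comp (Polynomial.mapRingHom (algebraMap F K)) = φ := by
    refine RingHom.ext fun q => ?_
    rw [RingHom.comp_apply, Polynomial.coe_mapRingHom, hψ', hφ']
  have h1 : (PowerSeries.X : PowerSeries K) ^ (N + 1) ∣
      Polynomial.eval₂ φ ((PowerSeries.trunc (N + 1) σ : Polynomial K) : PowerSeries K) p := by
    obtain ⟨q, hq⟩ := hcong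
    refine ⟨ψ q, ?_⟩
    have := congrArg ψ hq
    rw [map_mul, map_pow, Polynomial.hom_eval₂, hcomp] at this
    rw [hψ' (PowerSeries.trunc (N + 1) σ), hψ'] at this
    rw [this, Polynomial.coe_X]
  set I : Ideal (PowerSeries K) := Ideal.span {(PowerSeries.X : PowerSeries K) ^ (N + 1)} with hI
  rw [← Ideal.mem_span_singleton, ← hI]
  have hσtr : σ - ((PowerSeries.trunc (N + 1) σ : Polynomial K) : PowerSeries K) ∈ I := by
    rw [hI, Ideal.mem_span_singleton, PowerSeries.X_pow_dvd_iff]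
    intro m hm
    rw [map_sub, Polynomial.coeff_coe, PowerSeries.coeff_trunc, if_pos hm, sub_self]
  have hq1 : Ideal.Quotient.mk I (Polynomial.eval₂ φ σ p) = 0 := by
    rw [Polynomial.hom_eval₂]
    have hmkσ : Ideal.Quotient.mk I σ
        = Ideal.Quotient.mk I ((PowerSeries.trunc (N + 1) σ : Polynomial K) : PowerSeries K) :=
      Ideal.Quotient.eq.mpr hσtr
    rw [hmkσ, ← Polynomial.hom_eval₂]
    rw [Ideal.Quotient.eq_zero_iff_mem]
    rw [hI, Ideal.mem_span_singleton]
    exact h1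
  rwa [Ideal.Quotient.eq_zero_iff_mem] at hq1

/-- If `σ ∈ F̄[[X₁]]` is a root of the primitive polynomial `m₁ ∈ F[X₁][T]`,
irreducible over `F(X₁)`, with `deg_T m₁ ≤ D`, `deg_{X₁} m₁ ≤ δ`, and
`p ∈ F[X₁][T]` with `deg_{X₁} p ≤ δ`, `deg_T p ≤ D` satisfies
`p(X₁, σ_N) ≡ 0 mod X₁^{N+1}` for the truncation `σ_N` of `σ` with `N = 2Dδ`,
then `m₁` divides `p` in `F[X₁][T]`. -/
theorem min_poly_divides_of_truncated_root {F K : Type*} [Field F] [Field K]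
    [Algebra F K] [IsAlgClosed K] (D δ : ℕ) (hD : 0 < D) (hδ : 0 < δ)
    (m₁ p : Polynomial (Polynomial F)) (σ : PowerSeries K)
    (φ : Polynomial F →+* PowerSeries K)
    (hφ : φ = (PowerSeries.map (algebraMap F K)).comp Polynomial.coeToPowerSeries.ringHom)
    (hprim : m₁.IsPrimitive)
    (hirr : Irreducible (m₁.map (algebraMap (Polynomial F) (RatFunc F))))
    (hm₁T : m₁.natDegree ≤ D) (hm₁X : ∀ i, (m₁.coeff i).natDegree ≤ δ)
    (hroot : Polynomial.eval₂ φ σ m₁ = 0)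
    (hpX : ∀ i, (p.coeff i).natDegree ≤ δ) (hpT : p.natDegree ≤ D)
    (hcong : (Polynomial.X : Polynomial K) ^ (2 * D * δ + 1) ∣
      Polynomial.eval₂ (Polynomial.mapRingHom (algebraMap F K))
        (PowerSeries.trunc (2 * D * δ + 1) σ) p) :
    m₁ ∣ p := by
  classical
  rcases eq_or_ne p 0 with rfl | hp0
  · exact dvd_zero _
  set N := 2 * D * δ with hN
  set ι := algebraMap (Polynomial F) (RatFunc F) with hι
  have hιinj : Function.Injective ι := IsFractionRing.injective _ _
  have hφ' : ∀ q : Polynomial F, φ q = ((q.map (algebraMap F K) : Polynomial K) : PowerSeries K) := by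
    intro q
    rw [hφ]
    ext n
    simp [Polynomial.coeff_coe]
  -- Step A : X^(N+1) divides p(σ)
  have hA : (PowerSeries.X : PowerSeries K) ^ (N + 1) ∣ Polynomial.eval₂ φ σ p :=
    X_pow_dvd_eval₂_of_trunc N p σ φ hφ' hcong
  -- degrees
  set d := m₁.natDegree with hd
  set e := p.natDegree with he
  have hdmap : (m₁.map ι).natDegree = d := natDegree_map_eq_of_injective hιinj m₁
  have hm₁ne : (m₁.map ι) ≠ 0 := hirr.ne_zero
  have hd1 : 0 < d := by
    rcases Nat.eq_zero_or_pos d with h0 | h0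
    · exfalso
      have hc := Polynomial.eq_C_of_natDegree_eq_zero (hdmap.trans h0)
      refine hirr.not_isUnit ?_
      rw [hc]
      refine Polynomial.isUnit_C.mpr (isUnit_iff_ne_zero.mpr ?_)
      intro hz
      rw [hz, map_zero] at hc
      exact hm₁ne hc
    · exact h0
  -- reduce to divisibility over RatFunc F
  suffices hdvd : m₁.map ι ∣ p.map ι by
    have hpp : m₁ ∣ p.primPart := by
      apply hprim.dvd_of_fraction_map_dvd_fraction_map (K := RatFunc F)
      have hdecomp : p.map ι = Polynomial.C (ι p.content) * (p.primPart.map ι) := by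
        conv_lhs => rw [p.eq_C_content_mul_primPart]
        rw [Polynomial.map_mul, Polynomial.map_C]
      have hcu : IsUnit (Polynomial.C (ι p.content)) := by
        refine Polynomial.isUnit_C.mpr (isUnit_iff_ne_zero.mpr ?_)
        intro hz
        have : p.content = 0 := hιinj (by simpa using hz)
        exact hp0 (Polynomial.content_eq_zero_iff.mp this)
      rw [hdecomp] at hdvd
      exact hcu.dvd_mul_left.mp hdvd
    exact hpp.trans p.primPart_dvd
  by_contra hndvd
  -- the generalized Sylvester matrix
  set P : Fin e ⊕ Fin d → Polynomial (Polynomial F) :=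
    Sum.elim (fun i => m₁ * Polynomial.X ^ (i : ℕ)) (fun i => p * Polynomial.X ^ (i : ℕ)) with hP
  have hPdeg : ∀ r (k : ℕ), e + d ≤ k → (P r).coeff k = 0 := by
    rintro (i | i) k hk
    · rw [hP]
      simp only [Sum.elim_inl]
      rw [Polynomial.coeff_mul_X_pow']
      have hi : (i : ℕ) < e := i.isLt
      rw [if_pos (by omega)]
      exact Polynomial.coeff_eq_zero_of_natDegree_lt (by omega)
    · rw [hP]
      simp only [Sum.elim_inr]
      rw [Polynomial.coeff_mul_X_pow']
      have hi : (i : ℕ) < d := i.isLt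
      rw [if_pos (by omega)]
      exact Polynomial.coeff_eq_zero_of_natDegree_lt (by omega)
  set M : Matrix (Fin e ⊕ Fin d) (Fin e ⊕ Fin d) (Polynomial F) :=
    Matrix.of (fun r j => (P r).coeff ((finSumFinEquiv j : ℕ))) with hM
  have hMdeg : ∀ r j, (M r j).natDegree ≤ δ := by
    rintro (i | i) j
    · rw [hM]
      simp only [Matrix.of_apply, hP, Sum.elim_inl]
      rw [Polynomial.coeff_mul_X_pow']
      split
      · exact hm₁X _
      · simp
    · rw [hM]
      simp only [Matrix.of_apply, hP, Sum.elim_inr]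
      rw [Polynomial.coeff_mul_X_pow']
      split
      · exact hpX _
      · simp
  -- determinant degree bound
  have hdet : (M.det).natDegree ≤ N := by
    refine natDegree_det_le_of_forall_le M δ N hMdeg ?_
    have hcard : Fintype.card (Fin e ⊕ Fin d) = e + d := by
      simp [Fintype.card_sum]
    rw [hcard, hN]
    have hed : e + d ≤ 2 * D := by omega
    calc (e + d) * δ ≤ 2 * D * δ := Nat.mul_le_mul_right δ hed
      _ = 2 * D * δ := rfl
  -- Bezout identity from adjugate
  have hn0 : 0 < e + d := by omega
  obtain ⟨a, b, hkey⟩ : ∃ a b : Polynomial (Polynomial F),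
      a * m₁ + b * p = Polynomial.C M.det :=
    sylvester_det_mem_span e d hn0 m₁ p P hP hPdeg M hM
  -- nonvanishing of the determinant
  have hdetne : M.det ≠ 0 :=
    sylvester_det_ne_zero e d hd1 m₁ p rfl rfl hirr hndvd P hP M hM
  -- evaluate the Bezout identity at σ
  have hφc : φ M.det = Polynomial.eval₂ φ σ b * Polynomial.eval₂ φ σ p := by
    have h := congrArg (Polynomial.eval₂ φ σ) hkey
    rw [Polynomial.eval₂_add, Polynomial.eval₂_mul, Polynomial.eval₂_mul, hroot,
      Polynomial.eval₂_C, mul_zero, zero_add] at h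
    exact h.symm
  have hdvdc : (PowerSeries.X : PowerSeries K) ^ (N + 1) ∣ φ M.det :=
    hφc ▸ hA.mul_left _
  -- conclude det = 0, contradiction
  apply hdetne
  apply Polynomial.ext
  intro k
  rw [Polynomial.coeff_zero]
  rcases le_or_gt k N with hk | hk
  · have h0 : (PowerSeries.coeff k) (φ M.det) = 0 :=
      PowerSeries.X_pow_dvd_iff.mp hdvdc k (by omega)
    rw [hφ' M.det] at h0
    rw [Polynomial.coeff_coe, Polynomial.coeff_map] at h0
    exact (algebraMap F K).injective (by simpa using h0)
  · exact Polynomial.coeff_eq_zero_of_natDegree_lt (lt_of_le_of_lt hdet hk)
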